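/- With c(n,a,b,q) = (b;q)_n/(a;q)_n and d(n,m) = det((c(i+j+m,a,b,q))_{i,j=0}^{n-1}), one has d(n,1) = q^{binom(n,2)} · (b;q)_n / (q^{n-1}a; q)_n · d(n,0), provided all q-Pochhammer denominators are nonzero and 1 - a ≠ 0. -/

import Mathlib

/-- The q-Pochhammer symbol `(x; q)_n = ∏_{j=0}^{n-1} (1 - q^j x)`. -/
def qPoch {F : Type*} [Field F] (q x : F) (n : ℕ) : F :=
  ∏ j ∈ Finset.range n, (1 - q ^ j * x)

private lemma qPoch_add {F : Type*} [Field F] (q x : F) (m k : ℕ) :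
    qPoch q x (m + k) = qPoch q x m * qPoch q (q ^ m * x) k := by
  unfold qPoch
  rw [Finset.prod_range_add]
  congr 1
  refine Finset.prod_congr rfl fun j _ => ?_
  rw [pow_add]; ring

private lemma qPoch_shift_ne {F : Type*} [Field F] {q a : F}
    (ha : ∀ m : ℕ, qPoch q a m ≠ 0) (m k : ℕ) : qPoch q (q ^ m * a) k ≠ 0 := by
  intro h
  exact ha (m + k) (by rw [qPoch_add, h, mul_zero])

private noncomputable def hankelPoly {F : Type*} [Field F] (q a b : F) (n' j : ℕ) :
    Polynomial F :=
  (∏ k ∈ Finset.range j, (1 - Polynomial.C (q ^ k * b) * Polynomial.X)) *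
    ∏ k ∈ Finset.range (n' - j), (1 - Polynomial.C (q ^ (j + k) * a) * Polynomial.X)

private lemma hankelPoly_natDegree_lt {F : Type*} [Field F] (q a b : F) (n' j : ℕ)
    (hj : j ≤ n') : (hankelPoly q a b n' j).natDegree < n' + 1 := by
  have H : ∀ (m : ℕ) (c : ℕ → F),
      (∏ k ∈ Finset.range m, (1 - Polynomial.C (c k) * Polynomial.X)).natDegree ≤ m := by
    intro m c
    refine le_trans (Polynomial.natDegree_prod_le _ _) ?_
    refine le_trans (Finset.sum_le_card_nsmul _ _ 1 fun k _ => ?_) (by simp)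
    refine le_trans (Polynomial.natDegree_sub_le _ _) ?_
    simp only [Polynomial.natDegree_one, max_le_iff]
    exact ⟨Nat.zero_le _, le_trans (Polynomial.natDegree_mul_le) (by simp)⟩
  have := le_trans (Polynomial.natDegree_mul_le
    (p := ∏ k ∈ Finset.range j, (1 - Polynomial.C (q ^ k * b) * Polynomial.X))
    (q := ∏ k ∈ Finset.range (n' - j), (1 - Polynomial.C (q ^ (j + k) * a) * Polynomial.X)))
    (add_le_add (H j _) (H (n' - j) _))
  unfold hankelPoly
  omega

private lemma hankelPoly_eval {F : Type*} [Field F] (q a b x : F) (n' j : ℕ) :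
    (hankelPoly q a b n' j).eval x =
      (∏ k ∈ Finset.range j, (1 - q ^ k * b * x)) *
        ∏ k ∈ Finset.range (n' - j), (1 - q ^ (j + k) * a * x) := by
  simp [hankelPoly, Polynomial.eval_prod]

private noncomputable def coeffM {F : Type*} [Field F] (q a b : F) (n' : ℕ) :
    Matrix (Fin (n' + 1)) (Fin (n' + 1)) F :=
  Matrix.of fun k j => (hankelPoly q a b n' j.1).coeff k.1

private lemma key_det {F : Type*} [Field F] (q a b : F) (n' : ℕ)
    (ha : ∀ m : ℕ, qPoch q a m ≠ 0) (s : ℕ) :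
    Matrix.det (Matrix.of (fun i j : Fin (n' + 1) =>
        qPoch q b (i.1 + j.1 + s) / qPoch q a (i.1 + j.1 + s))) =
      (∏ i : Fin (n' + 1),
          qPoch q b (i.1 + s) * (qPoch q a (i.1 + s) * qPoch q (q ^ (i.1 + s) * a) n')⁻¹) *
        ((∏ i : Fin (n' + 1), ∏ j ∈ Finset.Ioi i, (q ^ (j.1 + s) - q ^ (i.1 + s))) *
          (coeffM q a b n').det) := by
  have hM : (Matrix.of (fun i j : Fin (n' + 1) =>
        qPoch q b (i.1 + j.1 + s) / qPoch q a (i.1 + j.1 + s))) =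
      Matrix.of (fun i j : Fin (n' + 1) =>
        (fun i : Fin (n' + 1) =>
          qPoch q b (i.1 + s) * (qPoch q a (i.1 + s) * qPoch q (q ^ (i.1 + s) * a) n')⁻¹) i *
        ((Matrix.vandermonde (fun i : Fin (n' + 1) => q ^ (i.1 + s))) * coeffM q a b n') i j) := by
    ext i j
    have hij : j.1 ≤ n' := Nat.lt_succ_iff.mp j.isLt
    have hent : ((Matrix.vandermonde (fun i : Fin (n' + 1) => q ^ (i.1 + s))) *
        coeffM q a b n') i j = (hankelPoly q a b n' j.1).eval (q ^ (i.1 + s)) := by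
      rw [Polynomial.eval_eq_sum_range' (hankelPoly_natDegree_lt q a b n' j.1 hij),
        Matrix.mul_apply,
        ← Fin.sum_univ_eq_sum_range
          (fun k => (hankelPoly q a b n' j.1).coeff k * (q ^ (i.1 + s)) ^ k) (n' + 1)]
      refine Finset.sum_congr rfl fun k _ => ?_
      simp [Matrix.vandermonde, coeffM, mul_comm]
    simp only [Matrix.of_apply, hent, hankelPoly_eval]
    have he1 : (∏ k ∈ Finset.range j.1, (1 - q ^ k * b * q ^ (i.1 + s))) =
        qPoch q (q ^ (i.1 + s) * b) j.1 := by
      unfold qPoch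
      refine Finset.prod_congr rfl fun k _ => ?_
      ring
    have he2 : (∏ k ∈ Finset.range (n' - j.1), (1 - q ^ (j.1 + k) * a * q ^ (i.1 + s))) =
        qPoch q (q ^ (i.1 + s + j.1) * a) (n' - j.1) := by
      unfold qPoch
      refine Finset.prod_congr rfl fun k _ => ?_
      rw [pow_add, pow_add, pow_add]
      ring
    rw [he1, he2]
    have e1 : i.1 + j.1 + s = i.1 + s + j.1 := by omega
    rw [e1]
    have f1 := qPoch_add q b (i.1 + s) j.1
    have f2 := qPoch_add q a (i.1 + s) j.1
    have f3 : qPoch q (q ^ (i.1 + s) * a) n' =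
        qPoch q (q ^ (i.1 + s) * a) j.1 * qPoch q (q ^ (i.1 + s + j.1) * a) (n' - j.1) := by
      have h := qPoch_add q (q ^ (i.1 + s) * a) j.1 (n' - j.1)
      rw [Nat.add_sub_cancel' hij] at h
      rw [h]
      congr 2
      rw [pow_add]; ring
    have hA0 : qPoch q a (i.1 + s) ≠ 0 := ha _
    have hA2 : qPoch q (q ^ (i.1 + s) * a) j.1 ≠ 0 := qPoch_shift_ne ha _ _
    have hA3 : qPoch q (q ^ (i.1 + s + j.1) * a) (n' - j.1) ≠ 0 := qPoch_shift_ne ha _ _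
    rw [f1, f2, f3]
    field_simp
    rw [mul_div_assoc, div_self (by rw [mul_comm a]; exact hA3), mul_one]
  rw [hM, Matrix.det_mul_column, Matrix.det_mul, Matrix.det_vandermonde]

theorem stmt_13 {F : Type*} [Field F] (q a b : F) (n : ℕ)
    (ha : ∀ m : ℕ, qPoch q a m ≠ 0)
    (hna : qPoch q (q ^ (n - 1) * a) n ≠ 0)
    (h1a : (1 : F) - a ≠ 0)
    (d : ℕ → F)
    (hd : ∀ m : ℕ, d m = Matrix.det (Matrix.of (fun i j : Fin n =>
        qPoch q b (i.1 + j.1 + m) / qPoch q a (i.1 + j.1 + m)))) :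
    d 1 = q ^ n.choose 2 * (qPoch q b n / qPoch q (q ^ (n - 1) * a) n) * d 0 := by
  rcases n with _ | n'
  · simp [hd, qPoch]
  simp only [Nat.add_sub_cancel] at hna ⊢
  rw [hd 1, hd 0, key_det q a b n' ha 1, key_det q a b n' ha 0]
  -- Vandermonde ratio
  have hcount : ∑ i : Fin (n' + 1), ((n' + 1) - 1 - i.1) = (n' + 1).choose 2 := by
    rw [Fin.sum_univ_eq_sum_range (fun i => (n' + 1) - 1 - i),
      Finset.sum_range_reflect (fun i => i) (n' + 1)]
    rw [Nat.choose_two_right, ← Finset.sum_range_id_mul_two (n' + 1), Nat.mul_div_cancel]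
    omega
  have hV : (∏ i : Fin (n' + 1), ∏ j ∈ Finset.Ioi i, (q ^ (j.1 + 1) - q ^ (i.1 + 1))) =
      q ^ ((n' + 1).choose 2) *
        ∏ i : Fin (n' + 1), ∏ j ∈ Finset.Ioi i, (q ^ (j.1 + 0) - q ^ (i.1 + 0)) := by
    rw [← hcount, ← Finset.prod_pow_eq_pow_sum, ← Finset.prod_mul_distrib]
    refine Finset.prod_congr rfl fun i _ => ?_
    rw [← Fin.card_Ioi i, ← Finset.prod_const, ← Finset.prod_mul_distrib]
    refine Finset.prod_congr rfl fun j _ => ?_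
    rw [pow_succ, pow_succ]
    ring
  -- product of row factors ratio
  have hsplit : ∀ t : ℕ, (∏ i : Fin (n' + 1),
      qPoch q b (i.1 + t) * (qPoch q a (i.1 + t) * qPoch q (q ^ (i.1 + t) * a) n')⁻¹) =
      (∏ i ∈ Finset.range (n' + 1), qPoch q b (i + t)) *
        ((∏ i ∈ Finset.range (n' + 1), qPoch q a (i + t)) *
          (∏ i ∈ Finset.range (n' + 1), qPoch q (q ^ (i + t) * a) n'))⁻¹ := by
    intro t
    rw [Fin.prod_univ_eq_prod_range
      (fun i => qPoch q b (i + t) * (qPoch q a (i + t) * qPoch q (q ^ (i + t) * a) n')⁻¹)]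
    rw [Finset.prod_mul_distrib, Finset.prod_inv_distrib, Finset.prod_mul_distrib]
  have hb0 : qPoch q b 0 = 1 := by simp [qPoch]
  have ha0 : qPoch q a 0 = 1 := by simp [qPoch]
  have t1 : ∏ i ∈ Finset.range (n' + 1), qPoch q b (i + 1) =
      (∏ i ∈ Finset.range (n' + 1), qPoch q b i) * qPoch q b (n' + 1) := by
    have h1 := Finset.prod_range_succ' (fun i => qPoch q b i) (n' + 1)
    have h2 := Finset.prod_range_succ (fun i => qPoch q b i) (n' + 1)
    rw [h2] at h1
    simpa [hb0] using h1.symm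
  have t2 : ∏ i ∈ Finset.range (n' + 1), qPoch q a (i + 1) =
      (∏ i ∈ Finset.range (n' + 1), qPoch q a i) * qPoch q a (n' + 1) := by
    have h1 := Finset.prod_range_succ' (fun i => qPoch q a i) (n' + 1)
    have h2 := Finset.prod_range_succ (fun i => qPoch q a i) (n' + 1)
    rw [h2] at h1
    simpa [ha0] using h1.symm
  have t3 : (∏ i ∈ Finset.range (n' + 1), qPoch q (q ^ (i + 1) * a) n') * qPoch q a n' =
      (∏ i ∈ Finset.range (n' + 1), qPoch q (q ^ i * a) n') *
        qPoch q (q ^ (n' + 1) * a) n' := by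
    have h1 := Finset.prod_range_succ' (fun i => qPoch q (q ^ i * a) n') (n' + 1)
    have h2 := Finset.prod_range_succ (fun i => qPoch q (q ^ i * a) n') (n' + 1)
    rw [h2] at h1
    simpa using h1.symm
  have hc : qPoch q a (n' + 1) * qPoch q (q ^ (n' + 1) * a) n' =
      qPoch q (q ^ n' * a) (n' + 1) * qPoch q a n' := by
    rw [mul_comm (qPoch q (q ^ n' * a) (n' + 1)), ← qPoch_add, ← qPoch_add]
    congr 1
    omega
  have han' : qPoch q a n' ≠ 0 := ha n'
  have hAN : qPoch q a (n' + 1) ≠ 0 := ha (n' + 1)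
  have hQ1 : (∏ i ∈ Finset.range (n' + 1), qPoch q (q ^ (i + 1) * a) n') ≠ 0 :=
    Finset.prod_ne_zero_iff.mpr fun i _ => qPoch_shift_ne ha _ _
  have hQ0 : (∏ i ∈ Finset.range (n' + 1), qPoch q (q ^ (i + 0) * a) n') ≠ 0 :=
    Finset.prod_ne_zero_iff.mpr fun i _ => qPoch_shift_ne ha _ _
  have hPa0 : (∏ i ∈ Finset.range (n' + 1), qPoch q a (i + 0)) ≠ 0 :=
    Finset.prod_ne_zero_iff.mpr fun i _ => ha _
  have hQ : qPoch q a (n' + 1) * (∏ i ∈ Finset.range (n' + 1), qPoch q (q ^ (i + 1) * a) n') =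
      qPoch q (q ^ n' * a) (n' + 1) *
        ∏ i ∈ Finset.range (n' + 1), qPoch q (q ^ (i + 0) * a) n' := by
    apply mul_right_cancel₀ han'
    calc qPoch q a (n' + 1) *
          (∏ i ∈ Finset.range (n' + 1), qPoch q (q ^ (i + 1) * a) n') * qPoch q a n'
        = qPoch q a (n' + 1) *
          ((∏ i ∈ Finset.range (n' + 1), qPoch q (q ^ (i + 1) * a) n') * qPoch q a n') := by
          ring
      _ = qPoch q a (n' + 1) *
          ((∏ i ∈ Finset.range (n' + 1), qPoch q (q ^ i * a) n') *
            qPoch q (q ^ (n' + 1) * a) n') := by rw [t3]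
      _ = (qPoch q a (n' + 1) * qPoch q (q ^ (n' + 1) * a) n') *
            ∏ i ∈ Finset.range (n' + 1), qPoch q (q ^ i * a) n' := by ring
      _ = (qPoch q (q ^ n' * a) (n' + 1) * qPoch q a n') *
            ∏ i ∈ Finset.range (n' + 1), qPoch q (q ^ i * a) n' := by rw [hc]
      _ = qPoch q (q ^ n' * a) (n' + 1) *
            (∏ i ∈ Finset.range (n' + 1), qPoch q (q ^ (i + 0) * a) n') * qPoch q a n' := by
          simp only [add_zero]; ring
  have hprod : (∏ i : Fin (n' + 1),
      qPoch q b (i.1 + 1) * (qPoch q a (i.1 + 1) * qPoch q (q ^ (i.1 + 1) * a) n')⁻¹) =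
      (qPoch q b (n' + 1) / qPoch q (q ^ n' * a) (n' + 1)) *
        ∏ i : Fin (n' + 1),
          qPoch q b (i.1 + 0) * (qPoch q a (i.1 + 0) * qPoch q (q ^ (i.1 + 0) * a) n')⁻¹ := by
    rw [hsplit 1, hsplit 0]
    have t1' : ∏ i ∈ Finset.range (n' + 1), qPoch q b (i + 1) =
        (∏ i ∈ Finset.range (n' + 1), qPoch q b (i + 0)) * qPoch q b (n' + 1) := by
      simpa using t1
    have t2' : ∏ i ∈ Finset.range (n' + 1), qPoch q a (i + 1) =
        (∏ i ∈ Finset.range (n' + 1), qPoch q a (i + 0)) * qPoch q a (n' + 1) := by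
      simpa using t2
    rw [t1', t2']
    have hQinv : (qPoch q a (n' + 1))⁻¹ *
        (∏ i ∈ Finset.range (n' + 1), qPoch q (q ^ (i + 1) * a) n')⁻¹ =
        (qPoch q (q ^ n' * a) (n' + 1))⁻¹ *
          (∏ i ∈ Finset.range (n' + 1), qPoch q (q ^ (i + 0) * a) n')⁻¹ := by
      rw [← mul_inv, ← mul_inv, hQ]
    rw [div_eq_mul_inv]
    simp only [mul_inv]
    linear_combination ((∏ i ∈ Finset.range (n' + 1), qPoch q b (i + 0)) *
      qPoch q b (n' + 1) * (∏ i ∈ Finset.range (n' + 1), qPoch q a (i + 0))⁻¹) * hQinv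
  rw [hV, hprod]
  ring
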